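/- For a q-state Potts model on a bipartite site set V = A ∪ B with couplings satisfying J_{ij} ≥ 0 for i,j both in A or both in B, and J_{ij} ≤ 0 for i ∈ A, j ∈ B, the two-point correlation G(i,j) = ⟨(q δ_{σ_i,σ_j} − 1)/(q−1)⟩ satisfies G(i,j) ≥ 0 when i,j lie in the same class (both in A or both in B), and G(i,j) ≤ 0 when i,j lie in opposite classes. -/

import Mathlib

open Finset

namespace PottsAux

noncomputable def ii (b : Bool) : ℝ := if b then 1 else -1

lemma ii_sq (b : Bool) : ii b * ii b = 1 := by cases b <;> norm_num [ii]

lemma ii_not (b : Bool) : ii (!b) = - ii b := by cases b <;> norm_num [ii]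

variable {V : Type*} [Fintype V] [DecidableEq V]

lemma monomial_nonneg (m : V → ℕ) :
    0 ≤ ∑ t : V → Bool, ∏ x, ii (t x) ^ m x := by
  by_cases h : ∀ x, Even (m x)
  · refine Finset.sum_nonneg fun t _ => ?_
    rw [Finset.prod_eq_one]
    · norm_num
    · intro x _
      cases hb : t x <;> simp [ii]
      · exact (h x).neg_one_pow
  · push_neg at h
    obtain ⟨x₀, hx₀⟩ := h
    have hodd : Odd (m x₀) := Nat.odd_iff.mpr (Nat.not_even_iff.mp hx₀)
    set f : (V → Bool) → ℝ := fun t => ∏ x, ii (t x) ^ m x with hf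
    have hneg : ∀ t : V → Bool, f (Function.update t x₀ (!(t x₀))) = - f t := by
      intro t
      rw [hf]
      simp only
      rw [← Finset.prod_erase_mul univ _ (mem_univ x₀),
          ← Finset.prod_erase_mul univ (fun x => ii (t x) ^ m x) (mem_univ x₀)]
      have h1 : ∀ x ∈ univ.erase x₀,
          ii (Function.update t x₀ (!(t x₀)) x) ^ m x = ii (t x) ^ m x := by
        intro x hx
        rw [Function.update_of_ne (Finset.mem_erase.mp hx).1]
      rw [Finset.prod_congr rfl h1, Function.update_self, ii_not, hodd.neg_pow]
      ring
    have hbij : Function.Bijective (fun t : V → Bool => Function.update t x₀ (!(t x₀))) := by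
      apply Function.Involutive.bijective
      intro t
      funext y
      by_cases hy : y = x₀
      · subst hy; simp
      · simp [Function.update_of_ne hy]
    have : ∑ t : V → Bool, f t = - ∑ t : V → Bool, f t := by
      have h2 : ∑ t : V → Bool, f (Function.update t x₀ (!(t x₀))) = ∑ t : V → Bool, f t :=
        hbij.sum_comp f
      have h3 : ∑ t : V → Bool, f t = ∑ t : V → Bool, - f t := by
        rw [← h2]; exact Finset.sum_congr rfl fun t _ => hneg t
      rw [Finset.sum_neg_distrib] at h3
      exact h3
    linarith


lemma exp_ii (k : ℝ) (b1 b2 : Bool) :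
    Real.exp (k * (ii b1 * ii b2)) = Real.cosh k + Real.sinh k * (ii b1 * ii b2) := by
  have h1 := Real.cosh_add_sinh k
  have h2 := Real.cosh_sub_sinh k
  cases b1 <;> cases b2 <;> simp [ii] <;> ring_nf <;> linarith

lemma mono_update (t : V → Bool) (z : V) (m : V → ℕ) :
    ii (t z) * ∏ x, ii (t x) ^ m x = ∏ x, ii (t x) ^ (m x + if x = z then 1 else 0) := by
  have h1 : ∀ x : V, ii (t x) ^ (m x + if x = z then 1 else 0)
      = ii (t x) ^ m x * (if x = z then ii (t x) else 1) := by
    intro x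
    by_cases hx : x = z <;> simp [hx, pow_add]
  rw [Finset.prod_congr rfl fun x _ => h1 x, Finset.prod_mul_distrib,
      Finset.prod_ite_eq' univ z (fun x => ii (t x))]
  simp [mul_comm]

lemma griffiths_pairs (K : V × V → ℝ) (hK : ∀ p, 0 ≤ K p) (P : Finset (V × V)) :
    ∀ m : V → ℕ,
    0 ≤ ∑ t : V → Bool, (∏ p ∈ P, Real.exp (K p * (ii (t p.1) * ii (t p.2)))) *
        ∏ x, ii (t x) ^ m x := by
  classical
  induction P using Finset.induction_on with
  | empty => intro m; simpa using monomial_nonneg m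
  | insert p P hp ih =>
    intro m
    have hterm : ∀ t : V → Bool,
        (∏ q ∈ insert p P, Real.exp (K q * (ii (t q.1) * ii (t q.2)))) * ∏ x, ii (t x) ^ m x
        = Real.cosh (K p) *
            ((∏ q ∈ P, Real.exp (K q * (ii (t q.1) * ii (t q.2)))) * ∏ x, ii (t x) ^ m x)
          + Real.sinh (K p) *
            ((∏ q ∈ P, Real.exp (K q * (ii (t q.1) * ii (t q.2)))) *
              ∏ x, ii (t x) ^ ((m x + if x = p.2 then 1 else 0) + if x = p.1 then 1 else 0)) := by
      intro t
      rw [Finset.prod_insert hp, exp_ii]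
      rw [← mono_update t p.1 (fun x => m x + if x = p.2 then 1 else 0), ← mono_update t p.2 m]
      ring
    rw [Finset.sum_congr rfl fun t _ => hterm t, Finset.sum_add_distrib,
        ← Finset.mul_sum, ← Finset.mul_sum]
    have h1 := ih m
    have h2 := ih (fun x => (m x + if x = p.2 then 1 else 0) + if x = p.1 then 1 else 0)
    have hc := (Real.cosh_pos (K p)).le
    have hs : 0 ≤ Real.sinh (K p) := by
      rw [Real.sinh_nonneg_iff]; exact hK p
    positivity

lemma griffiths (K : V → V → ℝ) (hK : ∀ x y, 0 ≤ K x y) (i j : V) :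
    0 ≤ ∑ t : V → Bool, Real.exp (∑ x, ∑ y, K x y * (ii (t x) * ii (t y))) *
        (ii (t i) * ii (t j)) := by
  have key := griffiths_pairs (fun p : V × V => K p.1 p.2) (fun p => hK p.1 p.2)
      (univ ×ˢ univ) (fun x => (if x = j then 1 else 0) + if x = i then 1 else 0)
  have hterm : ∀ t : V → Bool,
      (∏ p ∈ (univ ×ˢ univ : Finset (V × V)), Real.exp (K p.1 p.2 * (ii (t p.1) * ii (t p.2)))) *
        ∏ x, ii (t x) ^ ((if x = j then 1 else 0) + if x = i then 1 else 0)
      = Real.exp (∑ x, ∑ y, K x y * (ii (t x) * ii (t y))) * (ii (t i) * ii (t j)) := by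
    intro t
    have hexp : Real.exp (∑ x, ∑ y, K x y * (ii (t x) * ii (t y)))
        = ∏ p ∈ (univ ×ˢ univ : Finset (V × V)),
            Real.exp (K p.1 p.2 * (ii (t p.1) * ii (t p.2))) := by
      rw [← Real.exp_sum, Finset.sum_product]
    have hmono : ∏ x, ii (t x) ^ ((if x = j then 1 else 0) + if x = i then 1 else 0)
        = ii (t i) * ii (t j) := by
      rw [← mono_update t i (fun x => if x = j then 1 else 0)]
      congr 1
      have : ∀ x : V, ii (t x) ^ (if x = j then 1 else 0)
          = ii (t x) ^ ((0 : ℕ) + if x = j then 1 else 0) := by intro x; norm_num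
      rw [Finset.prod_congr rfl fun x _ => this x, ← mono_update t j (fun _ => 0)]
      simp
    rw [hexp, hmono]
  rw [← Finset.sum_congr rfl fun t _ => hterm t]
  exact key

variable {q : ℕ}

noncomputable def gsg (A : V → Prop) [DecidablePred A] (x : V) : ℝ := if A x then 1 else -1

noncomputable def wgt (J : V → V → ℝ) (σ : V → Fin q) : ℝ :=
  Real.exp (∑ x, ∑ y, J x y * (if σ x = σ y then (1:ℝ) else 0))

noncomputable def eps (a b c : Fin q) : ℝ := (if c = a then 1 else 0) - (if c = b then 1 else 0)

def Phi (a b : Fin q) (c : V → Fin q) (η : V → Bool) (x : V) : Fin q :=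
  if η x then Equiv.swap a b (c x) else c x

lemma gsq (A : V → Prop) [DecidablePred A] (x y : V) :
    (gsg A x * gsg A y) * (gsg A x * gsg A y) = 1 := by
  by_cases hx : A x <;> by_cases hy : A y <;> norm_num [gsg, hx, hy]

lemma R_sign (A : V → Prop) [DecidablePred A] (J : V → V → ℝ)
    (hsame : ∀ i j, (A i ↔ A j) → 0 ≤ J i j)
    (hopp : ∀ i j, ¬(A i ↔ A j) → J i j ≤ 0)
    (a b : Fin q) (hab : a ≠ b) (i j : V) (c : V → Fin q) :
    0 ≤ (gsg A i * gsg A j) *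
      ∑ η : V → Bool, wgt J (Phi a b c η) *
        (eps a b (Phi a b c η i) * eps a b (Phi a b c η j)) := by
  classical
  have hfix : ∀ x, ¬(c x = a ∨ c x = b) → ∀ η : V → Bool, Phi a b c η x = c x := by
    intro x hx η
    push_neg at hx
    unfold Phi
    by_cases hη : η x <;> simp [hη, Equiv.swap_apply_of_ne_of_ne hx.1 hx.2]
  by_cases hci : c i = a ∨ c i = b
  swap
  · have hz : ∀ η : V → Bool, eps a b (Phi a b c η i) = 0 := by
      intro η
      rw [hfix i hci η]
      push_neg at hci
      simp [eps, hci.1, hci.2]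
    have : (∑ η : V → Bool, wgt J (Phi a b c η) *
        (eps a b (Phi a b c η i) * eps a b (Phi a b c η j))) = 0 := by
      apply Finset.sum_eq_zero
      intro η _
      rw [hz η]; ring
    rw [this]; simp
  by_cases hcj : c j = a ∨ c j = b
  swap
  · have hz : ∀ η : V → Bool, eps a b (Phi a b c η j) = 0 := by
      intro η
      rw [hfix j hcj η]
      push_neg at hcj
      simp [eps, hcj.1, hcj.2]
    have : (∑ η : V → Bool, wgt J (Phi a b c η) *
        (eps a b (Phi a b c η i) * eps a b (Phi a b c η j))) = 0 := by
      apply Finset.sum_eq_zero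
      intro η _
      rw [hz η]; ring
    rw [this]; simp
  -- main case
  set u : V → Bool := fun x => decide (c x = b) with hu_def
  set v : V → Bool := fun x => decide (A x) with hv_def
  set tm : (V → Bool) → V → Bool := fun η x => ((η x == u x) == v x) with htm_def
  set Kt : V → V → ℝ := fun x y =>
    (if (c x = a ∨ c x = b) ∧ (c y = a ∨ c y = b) then J x y / 2 else 0) * (gsg A x * gsg A y)
    with hKt_def
  set C0 : V → V → ℝ := fun x y =>
    if (c x = a ∨ c x = b) ∧ (c y = a ∨ c y = b) then J x y / 2
    else if ¬(c x = a ∨ c x = b) ∧ ¬(c y = a ∨ c y = b) then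
      J x y * (if c x = c y then 1 else 0) else 0 with hC0_def
  have hsite : ∀ x, (c x = a ∨ c x = b) → ∀ η : V → Bool,
      Phi a b c η x = (if (η x == u x) then a else b) := by
    intro x hx η
    unfold Phi
    rcases hx with hx | hx <;> by_cases hη : η x <;>
      simp [hη, hx, hu_def, hab, Equiv.swap_apply_left, Equiv.swap_apply_right]
  have hgauge : ∀ (x : V) (η : V → Bool), gsg A x * ii (tm η x) = ii (η x == u x) := by
    intro x η
    by_cases hA : A x <;>
      cases hw : (η x == u x) <;>
        simp [gsg, hA, htm_def, hv_def, hw, ii]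
  have heps : ∀ x, (c x = a ∨ c x = b) → ∀ η : V → Bool,
      eps a b (Phi a b c η x) = ii (η x == u x) := by
    intro x hx η
    rw [hsite x hx η]
    cases hw : (η x == u x) <;> simp [eps, hab, Ne.symm hab, ii]
  have hKt : ∀ x y, 0 ≤ Kt x y := by
    intro x y
    rw [hKt_def]
    by_cases h : (c x = a ∨ c x = b) ∧ (c y = a ∨ c y = b)
    · simp only [if_pos h]
      by_cases hax : A x <;> by_cases hay : A y <;> simp [gsg, hax, hay]
      · linarith [hsame x y (by tauto)]
      · linarith [hopp x y (by tauto)]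
      · linarith [hopp x y (by tauto)]
      · linarith [hsame x y (by tauto)]
    · simp [if_neg h]
  have hxy : ∀ (η : V → Bool) (x y : V),
      J x y * (if Phi a b c η x = Phi a b c η y then (1:ℝ) else 0)
      = C0 x y + Kt x y * (ii (tm η x) * ii (tm η y)) := by
    intro η x y
    by_cases hx : c x = a ∨ c x = b <;> by_cases hy : c y = a ∨ c y = b
    · rw [hsite x hx η, hsite y hy η]
      have hKv : Kt x y * (ii (tm η x) * ii (tm η y))
          = (J x y / 2) * (ii (η x == u x) * ii (η y == u y)) := by
        rw [hKt_def]
        simp only [if_pos (And.intro hx hy)]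
        rw [← hgauge x η, ← hgauge y η]; ring
      rw [hKv, hC0_def]
      simp only [if_pos (And.intro hx hy)]
      cases hwx : (η x == u x) <;> cases hwy : (η y == u y) <;>
        simp [ii, hab, Ne.symm hab] <;> ring
    · have h0 : ¬ (Phi a b c η x = Phi a b c η y) := by
        rw [hsite x hx η, hfix y hy η]
        push_neg at hy
        cases hw : (η x == u x) <;> simp [hw]
        · exact fun h => hy.2 h.symm
        · exact fun h => hy.1 h.symm
      rw [hC0_def, hKt_def]
      simp [hx, hy, h0]
    · have h0 : ¬ (Phi a b c η x = Phi a b c η y) := by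
        rw [hsite y hy η, hfix x hx η]
        push_neg at hx
        cases hw : (η y == u y) <;> simp [hw]
        · exact fun h => hx.2 h
        · exact fun h => hx.1 h
      rw [hC0_def, hKt_def]
      simp [hx, hy, h0]
    · rw [hfix x hx η, hfix y hy η, hC0_def, hKt_def]
      simp [hx, hy]
  have hterm : ∀ η : V → Bool,
      wgt J (Phi a b c η) * (eps a b (Phi a b c η i) * eps a b (Phi a b c η j))
      = (Real.exp (∑ x, ∑ y, C0 x y) * (gsg A i * gsg A j)) *
          (Real.exp (∑ x, ∑ y, Kt x y * (ii (tm η x) * ii (tm η y))) *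
            (ii (tm η i) * ii (tm η j))) := by
    intro η
    have hsplit : (∑ x, ∑ y, J x y * (if Phi a b c η x = Phi a b c η y then (1:ℝ) else 0))
        = (∑ x, ∑ y, C0 x y) + ∑ x, ∑ y, Kt x y * (ii (tm η x) * ii (tm η y)) := by
      rw [← Finset.sum_add_distrib]
      refine Finset.sum_congr rfl fun x _ => ?_
      rw [← Finset.sum_add_distrib]
      exact Finset.sum_congr rfl fun y _ => hxy η x y
    rw [wgt, hsplit, Real.exp_add, heps i hci η, heps j hcj η, ← hgauge i η, ← hgauge j η]
    ring
  rw [Finset.sum_congr rfl fun η _ => hterm η, ← Finset.mul_sum]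
  have hbijtm : Function.Bijective tm := by
    apply Function.Involutive.bijective
    intro η
    funext x
    rw [htm_def]
    simp only
    cases hx : η x <;> cases hu : u x <;> cases hv : v x <;> simp [hx, hu, hv]
  have hsum2 : (∑ η : V → Bool,
      Real.exp (∑ x, ∑ y, Kt x y * (ii (tm η x) * ii (tm η y))) *
        (ii (tm η i) * ii (tm η j)))
      = ∑ tb : V → Bool,
          Real.exp (∑ x, ∑ y, Kt x y * (ii (tb x) * ii (tb y))) * (ii (tb i) * ii (tb j)) :=
    hbijtm.sum_comp fun tb =>
      Real.exp (∑ x, ∑ y, Kt x y * (ii (tb x) * ii (tb y))) * (ii (tb i) * ii (tb j))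
  rw [hsum2]
  have hG := griffiths Kt hKt i j
  have hE := (Real.exp_pos (∑ x, ∑ y, C0 x y)).le
  have hgsq := gsq A i j
  set G := gsg A i * gsg A j
  set SS := ∑ tb : V → Bool,
      Real.exp (∑ x, ∑ y, Kt x y * (ii (tb x) * ii (tb y))) * (ii (tb i) * ii (tb j))
  calc (0:ℝ) ≤ Real.exp (∑ x, ∑ y, C0 x y) * SS := mul_nonneg hE hG
  _ = G * ((Real.exp (∑ x, ∑ y, C0 x y) * G) * SS) := by
      rw [show G * ((Real.exp (∑ x, ∑ y, C0 x y) * G) * SS)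
          = (G * G) * (Real.exp (∑ x, ∑ y, C0 x y) * SS) from by ring, hgsq, one_mul]

lemma T_sign (A : V → Prop) [DecidablePred A] (J : V → V → ℝ)
    (hsame : ∀ i j, (A i ↔ A j) → 0 ≤ J i j)
    (hopp : ∀ i j, ¬(A i ↔ A j) → J i j ≤ 0)
    (a b : Fin q) (i j : V) :
    0 ≤ (gsg A i * gsg A j) *
      ∑ σ : V → Fin q, wgt J σ * (eps a b (σ i) * eps a b (σ j)) := by
  classical
  by_cases hab : a = b
  · subst hab
    simp [eps]
  · set F : (V → Fin q) → ℝ := fun σ => wgt J σ * (eps a b (σ i) * eps a b (σ j)) with hF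
    have hb : ∀ η : V → Bool, Function.Bijective (fun c : V → Fin q => Phi a b c η) := by
      intro η
      apply Function.Involutive.bijective
      intro c
      funext x
      unfold Phi
      by_cases hη : η x <;> simp [hη, Equiv.swap_apply_self]
    have h1 : ∀ η : V → Bool, (∑ c : V → Fin q, F (Phi a b c η)) = ∑ σ, F σ :=
      fun η => (hb η).sum_comp F
    have h2 : 0 ≤ (gsg A i * gsg A j) * ∑ c : V → Fin q, ∑ η : V → Bool, F (Phi a b c η) := by
      rw [Finset.mul_sum]
      exact Finset.sum_nonneg fun c _ => R_sign A J hsame hopp a b hab i j c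
    have h3 : (∑ c : V → Fin q, ∑ η : V → Bool, F (Phi a b c η))
        = (Fintype.card (V → Bool) : ℝ) * ∑ σ, F σ := by
      rw [Finset.sum_comm, Finset.sum_congr rfl fun η _ => h1 η, Finset.sum_const,
        nsmul_eq_mul, Finset.card_univ]
    rw [h3] at h2
    have hcard : (0:ℝ) < (Fintype.card (V → Bool) : ℝ) := by
      exact_mod_cast Fintype.card_pos
    rw [show (gsg A i * gsg A j) * ((Fintype.card (V → Bool) : ℝ) * ∑ σ, F σ)
        = (Fintype.card (V → Bool) : ℝ) * ((gsg A i * gsg A j) * ∑ σ, F σ) from by ring] at h2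
    exact (mul_nonneg_iff_of_pos_left hcard).mp h2

lemma eps_key (s t : Fin q) :
    ∑ a : Fin q, ∑ b : Fin q, eps a b s * eps a b t
      = 2 * ((q:ℝ) * (if s = t then 1 else 0) - 1) := by
  simp only [eps, sub_mul, mul_sub, Finset.sum_sub_distrib]
  simp [Finset.sum_ite_eq, Finset.sum_ite_eq', mul_ite, ite_mul, mul_boole, boole_mul,
    Finset.sum_const, Finset.card_univ]
  by_cases hst : s = t <;> simp [hst] <;> ring

lemma Nprime_sign (A : V → Prop) [DecidablePred A] (J : V → V → ℝ)
    (hsame : ∀ i j, (A i ↔ A j) → 0 ≤ J i j)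
    (hopp : ∀ i j, ¬(A i ↔ A j) → J i j ≤ 0)
    (i j : V) :
    0 ≤ (gsg A i * gsg A j) *
      ∑ σ : V → Fin q, wgt J σ * ((q:ℝ) * (if σ i = σ j then 1 else 0) - 1) := by
  classical
  set N' := ∑ σ : V → Fin q, wgt J σ * ((q:ℝ) * (if σ i = σ j then 1 else 0) - 1) with hN'
  have hsum : (∑ a : Fin q, ∑ b : Fin q,
      ∑ σ : V → Fin q, wgt J σ * (eps a b (σ i) * eps a b (σ j))) = 2 * N' := by
    rw [Finset.sum_congr rfl fun a (_ : a ∈ univ) => Finset.sum_comm, Finset.sum_comm]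
    rw [hN', Finset.mul_sum]
    refine Finset.sum_congr rfl fun σ _ => ?_
    rw [show (∑ a : Fin q, ∑ b : Fin q, wgt J σ * (eps a b (σ i) * eps a b (σ j)))
        = wgt J σ * ∑ a : Fin q, ∑ b : Fin q, eps a b (σ i) * eps a b (σ j) from by
      rw [Finset.mul_sum]
      exact Finset.sum_congr rfl fun a _ => by rw [Finset.mul_sum]]
    rw [eps_key (σ i) (σ j)]
    ring
  have hGsum : 0 ≤ (gsg A i * gsg A j) * (2 * N') := by
    rw [← hsum, Finset.mul_sum]
    refine Finset.sum_nonneg fun a _ => ?_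
    rw [Finset.mul_sum]
    exact Finset.sum_nonneg fun b _ => T_sign A J hsame hopp a b i j
  nlinarith [hGsum]

end PottsAux

open PottsAux in
theorem potts_bipartite_antiferro_two_point_sign
    {V : Type*} [Fintype V] [DecidableEq V]
    (q : ℕ) (hq : 2 ≤ q) (A : V → Prop) [DecidablePred A] (J : V → V → ℝ)
    (hsymm : ∀ i j, J i j = J j i)
    (hsame : ∀ i j, (A i ↔ A j) → 0 ≤ J i j)
    (hopp : ∀ i j, ¬(A i ↔ A j) → J i j ≤ 0)
    (i j : V) :
    ((A i ↔ A j) →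
      0 ≤ (∑ σ : V → Fin q,
            Real.exp (∑ x : V, ∑ y : V, J x y * (if σ x = σ y then 1 else 0)) *
              (((q : ℝ) * (if σ i = σ j then 1 else 0) - 1) / ((q : ℝ) - 1)))
          / (∑ σ : V → Fin q,
            Real.exp (∑ x : V, ∑ y : V, J x y * (if σ x = σ y then 1 else 0)))) ∧
    (¬(A i ↔ A j) →
      (∑ σ : V → Fin q,
            Real.exp (∑ x : V, ∑ y : V, J x y * (if σ x = σ y then 1 else 0)) *
              (((q : ℝ) * (if σ i = σ j then 1 else 0) - 1) / ((q : ℝ) - 1)))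
          / (∑ σ : V → Fin q,
            Real.exp (∑ x : V, ∑ y : V, J x y * (if σ x = σ y then 1 else 0))) ≤ 0) := by
  classical
  have hqR : (0:ℝ) < (q:ℝ) - 1 := by
    have : (2:ℝ) ≤ (q:ℝ) := by exact_mod_cast hq
    linarith
  have hD : (0:ℝ) ≤ ∑ σ : V → Fin q,
      Real.exp (∑ x : V, ∑ y : V, J x y * (if σ x = σ y then 1 else 0)) :=
    Finset.sum_nonneg fun σ _ => (Real.exp_pos _).le
  have hkey := Nprime_sign (q := q) A J hsame hopp i j
  simp only [wgt] at hkey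
  set N' := ∑ σ : V → Fin q,
      Real.exp (∑ x : V, ∑ y : V, J x y * (if σ x = σ y then 1 else 0)) *
        ((q:ℝ) * (if σ i = σ j then 1 else 0) - 1) with hN'
  have hnum : (∑ σ : V → Fin q,
      Real.exp (∑ x : V, ∑ y : V, J x y * (if σ x = σ y then 1 else 0)) *
        (((q : ℝ) * (if σ i = σ j then 1 else 0) - 1) / ((q : ℝ) - 1)))
      = N' / ((q:ℝ) - 1) := by
    rw [hN', Finset.sum_div]
    exact Finset.sum_congr rfl fun σ _ => (mul_div_assoc _ _ _).symm
  constructor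
  · intro hij
    have hG : gsg A i * gsg A j = 1 := by
      by_cases hAi : A i
      · have hAj : A j := hij.mp hAi
        simp [gsg, hAi, hAj]
      · have hAj : ¬ A j := fun h => hAi (hij.mpr h)
        simp [gsg, hAi, hAj]
    rw [hG, one_mul] at hkey
    rw [hnum]
    exact div_nonneg (div_nonneg hkey hqR.le) hD
  · intro hij
    have hG : gsg A i * gsg A j = -1 := by
      by_cases hAi : A i
      · have hAj : ¬ A j := fun h => hij ⟨fun _ => h, fun _ => hAi⟩
        simp [gsg, hAi, hAj]
      · have hAj : A j := by
          by_contra hAj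
          exact hij ⟨fun h => absurd h hAi, fun h => absurd h hAj⟩
        simp [gsg, hAi, hAj]
    rw [hG] at hkey
    have hkey' : N' ≤ 0 := by linarith
    rw [hnum]
    have h1 : 0 ≤ (-N') / ((q:ℝ) - 1) / (∑ σ : V → Fin q,
        Real.exp (∑ x : V, ∑ y : V, J x y * (if σ x = σ y then 1 else 0))) :=
      div_nonneg (div_nonneg (by linarith) hqR.le) hD
    rw [neg_div, neg_div] at h1
    linarith
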